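/- arXiv:math/0206106 — 3 statements merged into one kernel-verified Lean document; each statement's English description precedes it below -/
import Mathlib

section
/- Let X be an infinite-dimensional real Banach space and let D be a countably incomplete ultrafilter on a set I. Then the canonical embedding d_X : X → (X)_D is not surjective, i.e. (X)_D \ d_X(X) ≠ ∅. -/
open Cardinal Filter
open scoped ENNReal

universe u v

noncomputable section

instance : Fact ((1 : ℝ≥0∞) ≤ ∞) := ⟨le_top⟩

/-- `dim X`: the least cardinality of a subset of `X` whose closed linear span is all of `X`. -/
def spanDim (X : Type*) [SeminormedAddCommGroup X] [NormedSpace ℝ X] : Cardinal :=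
  sInf {c : Cardinal | ∃ s : Set X,
    closure (Submodule.span ℝ s : Set X) = Set.univ ∧ Cardinal.mk s = c}

/-- The subspace `N_D` of `ℓ_∞(I, X)` of families whose norms tend to `0` along the
ultrafilter `D`. -/
def ultraNull {I : Type*} (D : Ultrafilter I) (X : Type*)
    [NormedAddCommGroup X] [NormedSpace ℝ X] :
    Submodule ℝ (lp (fun _ : I => X) ∞) where
  carrier := {f | Tendsto (fun i => ‖f i‖) (D : Filter I) (nhds 0)}
  zero_mem' := by
    simp only [Set.mem_setOf_eq, lp.coeFn_zero, Pi.zero_apply, norm_zero]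
    exact tendsto_const_nhds
  add_mem' := by
    intro f g hf hg
    have h : Tendsto (fun i => ‖f i‖ + ‖g i‖) (D : Filter I) (nhds 0) := by
      simpa using hf.add hg
    exact squeeze_zero (fun i => norm_nonneg _) (fun i => norm_add_le _ _) h
  smul_mem' := by
    intro c f hf
    have h : Tendsto (fun i => ‖c‖ * ‖f i‖) (D : Filter I) (nhds 0) := by
      simpa using hf.const_mul ‖c‖
    refine squeeze_zero (fun i => norm_nonneg _) (fun i => ?_) h
    simp [norm_smul]

/-- The ultrapower `(X)_D` of a Banach space `X` by an ultrafilter `D`: the quotient of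
`ℓ_∞(I, X)` by the subspace of families with `lim_D ‖x_i‖ = 0`. -/
abbrev Ultrapower {I : Type*} (D : Ultrafilter I) (X : Type*)
    [NormedAddCommGroup X] [NormedSpace ℝ X] : Type _ :=
  (lp (fun _ : I => X) ∞) ⧸ ultraNull D X

/-- The canonical (diagonal) embedding `d_X : X → (X)_D`. -/
def canonicalEmbedding {I : Type*} (D : Ultrafilter I) (X : Type*)
    [NormedAddCommGroup X] [NormedSpace ℝ X] : X → Ultrapower D X := fun x =>
  Submodule.Quotient.mk
    (⟨fun _ => x, memℓp_infty ⟨‖x‖, by rintro - ⟨i, rfl⟩; simp⟩⟩ : lp (fun _ : I => X) ∞)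

/-- An ultrafilter `D` is `κ`-complete if every subfamily `G ⊆ D` with `card G < κ`
satisfies `⋂₀ G ∈ D`. -/
def UltrafilterComplete {I : Type u} (D : Ultrafilter I) (κ : Cardinal.{v}) : Prop :=
  ∀ G : Set (Set I), (∀ A ∈ G, A ∈ D) →
    Cardinal.lift.{v} (Cardinal.mk G) < Cardinal.lift.{u} κ → ⋂₀ G ∈ D

/-- An ultrafilter is countably incomplete if it is not `ω₁`-complete. -/
def CountablyIncomplete {I : Type*} (D : Ultrafilter I) : Prop :=
  ¬ UltrafilterComplete D (Cardinal.aleph.{0} 1)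

/-- For an infinite-dimensional Banach space `X` and a countably incomplete ultrafilter
`D`, the canonical embedding `d_X : X → (X)_D` is not surjective. -/
theorem canonicalEmbedding_not_surjective_of_countablyIncomplete
    (X : Type*) [NormedAddCommGroup X] [NormedSpace ℝ X] [CompleteSpace X]
    (hinf : ¬ FiniteDimensional ℝ X)
    {I : Type*} (D : Ultrafilter I) (hD : CountablyIncomplete D) :
    ¬ Function.Surjective (canonicalEmbedding D X) := by
  classical
  -- Extract a countable family witnessing countable incompleteness
  rw [CountablyIncomplete, UltrafilterComplete] at hD
  push_neg at hD
  obtain ⟨G, hGD, hGcard, hGnot⟩ := hD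
  have hGcount : G.Countable := by
    rw [Cardinal.lift_uzero, Cardinal.lift_aleph, Ordinal.lift_one] at hGcard
    exact (Cardinal.countable_iff_lt_aleph_one G).mpr hGcard
  have hGne : G.Nonempty := by
    rcases G.eq_empty_or_nonempty with h | h
    · exfalso; apply hGnot; rw [h, Set.sInter_empty]; exact Filter.univ_mem
    · exact h
  obtain ⟨A, hA⟩ := Set.Countable.exists_eq_range hGcount hGne
  -- the sets B n ∈ D with empty intersection
  set B : ℕ → Set I := fun n => A n ∩ (⋂₀ G)ᶜ with hB
  have hBD : ∀ n, B n ∈ D := by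
    intro n
    refine Filter.inter_mem (hGD (A n) ?_) ((Ultrafilter.compl_mem_iff_notMem).mpr hGnot)
    rw [hA]; exact ⟨n, rfl⟩
  have hBempty : ∀ i : I, ∃ n, i ∉ B n := by
    intro i
    by_contra h
    push_neg at h
    have hi : i ∈ ⋂₀ G := by
      intro s hs
      rw [hA] at hs
      obtain ⟨n, rfl⟩ := hs
      exact (h n).1
    exact (h 0).2 hi
  -- the index function
  set m : I → ℕ := fun i => Nat.find (hBempty i) with hm
  have hmB : ∀ i, i ∉ B (m i) := fun i => Nat.find_spec (hBempty i)
  -- a separated bounded sequence in X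
  obtain ⟨R, x, hR1, hxR, hxsep⟩ := exists_seq_norm_le_one_le_norm_sub hinf
  -- the element of ℓ∞
  have hmem : Memℓp (fun i : I => x (m i)) ∞ := by
    apply memℓp_infty
    refine ⟨R, ?_⟩
    rintro - ⟨i, rfl⟩
    exact hxR (m i)
  set g : lp (fun _ : I => X) ∞ := ⟨fun i => x (m i), hmem⟩ with hg
  intro hsurj
  obtain ⟨x₀, hx₀⟩ := hsurj (Submodule.Quotient.mk g)
  -- hence the norms of the differences tend to 0 along D
  have hnull : Tendsto (fun i => ‖x₀ - g i‖) (D : Filter I) (nhds 0) := by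
    have h1 : (⟨fun _ => x₀, memℓp_infty ⟨‖x₀‖, by rintro - ⟨i, rfl⟩; simp⟩⟩ :
        lp (fun _ : I => X) ∞) - g ∈ ultraNull D X := (Submodule.Quotient.eq _).mp hx₀
    have h2 : ∀ i : I, ‖x₀ - g i‖ = ‖((⟨fun _ => x₀, memℓp_infty ⟨‖x₀‖, by
        rintro - ⟨i, rfl⟩; simp⟩⟩ : lp (fun _ : I => X) ∞) - g) i‖ := by
      intro i
      simp [lp.coeFn_sub, Pi.sub_apply]
      rfl
    rw [show (fun i => ‖x₀ - g i‖) = _ from funext h2]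
    exact h1
  -- the set of indices where the distance is < 1/2 is in D
  have hS : {i : I | ‖x₀ - g i‖ < 1/2} ∈ D := by
    have := hnull (Metric.ball_mem_nhds (0:ℝ) (by norm_num : (0:ℝ) < 1/2))
    refine Filter.mem_of_superset this ?_
    intro i hi
    simp only [Set.mem_preimage, Metric.mem_ball, Real.dist_eq, sub_zero] at hi
    simpa [abs_of_nonneg (norm_nonneg _)] using hi
  -- at most one n satisfies ‖x₀ - x n‖ < 1/2
  rcases Set.eq_empty_or_nonempty {i : I | ‖x₀ - g i‖ < 1/2} with he | ⟨i₀, hi₀⟩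
  · rw [he] at hS
    exact (Filter.empty_notMem _) hS
  · have hsub : {i : I | ‖x₀ - g i‖ < 1/2} ⊆ (B (m i₀))ᶜ := by
      intro i hi
      have hmi : m i = m i₀ := by
        by_contra hne
        have h1 : (1:ℝ) ≤ ‖x (m i) - x (m i₀)‖ := hxsep hne
        have h2 : ‖x (m i) - x (m i₀)‖ ≤ ‖x₀ - g i‖ + ‖x₀ - g i₀‖ := by
          have : x (m i) - x (m i₀) = -(x₀ - g i) + (x₀ - g i₀) := by
            show x (m i) - x (m i₀) = -(x₀ - x (m i)) + (x₀ - x (m i₀))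
            abel
          rw [this]
          exact (norm_add_le _ _).trans (by rw [norm_neg])
        have := hi₀
        simp only [Set.mem_setOf_eq] at hi this
        linarith
      rw [← hmi]
      exact hmB i
    have : (B (m i₀))ᶜ ∈ D := Filter.mem_of_superset hS hsub
    exact ((Ultrafilter.compl_mem_iff_notMem).mp this) (hBD (m i₀))
end
end

section
/- Let X be an infinite-dimensional real Banach space with dim(X) = κ, let τ be an infinite cardinal, and let D be a τ-regular ultrafilter on a set I with card(I) = τ. Then dim((X)_D) = κ^τ. -/
open Cardinal Filter
open scoped ENNReal

universe u v

noncomputable section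

/-- An ultrafilter `D` on `I` is `τ`-regular if there is a subfamily `G ⊆ D` of
cardinality `τ` such that every `i ∈ I` belongs to only finitely many members of `G`. -/
def IsRegularUltrafilter {I : Type u} (D : Ultrafilter I) (τ : Cardinal.{u}) : Prop :=
  ∃ G : Set (Set I), (∀ A ∈ G, A ∈ D) ∧ Cardinal.mk G = τ ∧
    ∀ i : I, {A ∈ G | i ∈ A}.Finite

section Aux

variable {Y : Type u} [SeminormedAddCommGroup Y] [NormedSpace ℝ Y]

/-- Finite rational combinations of elements of `s`. -/
def ratCombos (s : Set Y) : Set Y :=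
  Set.range (fun p : Σ n : ULift.{u} ℕ, (Fin n.down → ULift.{u} ℚ) × (Fin n.down → s) =>
    ∑ i, ((p.2.1 i).down : ℝ) • (p.2.2 i : Y))

lemma zero_mem_ratCombos (s : Set Y) : 0 ∈ ratCombos s :=
  ⟨⟨ULift.up 0, Fin.elim0, Fin.elim0⟩, by simp⟩

lemma add_mem_ratCombos {s : Set Y} {x y : Y} (hx : x ∈ ratCombos s) (hy : y ∈ ratCombos s) :
    x + y ∈ ratCombos s := by
  obtain ⟨⟨n, c, v⟩, rfl⟩ := hx
  obtain ⟨⟨m, d, w⟩, rfl⟩ := hy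
  refine ⟨⟨ULift.up (n.down + m.down), Fin.append c d, Fin.append v w⟩, ?_⟩
  simp only [Fin.sum_univ_add, Fin.append_left, Fin.append_right]

lemma ratSMul_mem_ratCombos {s : Set Y} (q : ℚ) {x : Y} (hx : x ∈ ratCombos s) :
    (q : ℝ) • x ∈ ratCombos s := by
  obtain ⟨⟨n, c, v⟩, rfl⟩ := hx
  refine ⟨⟨n, fun i => ULift.up (q * (c i).down), v⟩, ?_⟩
  rw [Finset.smul_sum]
  simp [smul_smul]

lemma mem_ratCombos_of_mem {s : Set Y} {x : Y} (hx : x ∈ s) : x ∈ ratCombos s :=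
  ⟨⟨ULift.up 1, fun _ => ULift.up 1, fun _ => ⟨x, hx⟩⟩, by simp⟩

lemma mk_ratCombos_le (s : Set Y) : Cardinal.mk (ratCombos s) ≤ ℵ₀ ⊔ Cardinal.mk s := by
  refine le_trans Cardinal.mk_range_le ?_
  rw [Cardinal.mk_sigma]
  have hbound : ∀ n : ULift.{u} ℕ,
      Cardinal.mk ((Fin n.down → ULift.{u} ℚ) × (Fin n.down → s)) ≤ ℵ₀ ⊔ Cardinal.mk s := by
    intro n
    have h1 : Cardinal.mk (Fin n.down → ULift.{u} ℚ) ≤ ℵ₀ ⊔ Cardinal.mk s :=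
      le_sup_of_le_left (Cardinal.mk_le_aleph0)
    have h2 : Cardinal.mk (Fin n.down → s) ≤ ℵ₀ ⊔ Cardinal.mk s := by
      have : Cardinal.mk (Fin n.down → s) = Cardinal.mk s ^ (n.down : Cardinal) := by
        simp [Cardinal.mk_arrow]
      rw [this]
      calc Cardinal.mk s ^ (n.down : Cardinal) ≤ (ℵ₀ ⊔ Cardinal.mk s) ^ (n.down : Cardinal) :=
            Cardinal.power_le_power_right le_sup_right
        _ ≤ ℵ₀ ⊔ Cardinal.mk s := Cardinal.power_nat_le le_sup_left
    calc Cardinal.mk ((Fin n.down → ULift.{u} ℚ) × (Fin n.down → s))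
        = Cardinal.mk (Fin n.down → ULift.{u} ℚ) * Cardinal.mk (Fin n.down → s) :=
          by rw [Cardinal.mk_prod, Cardinal.lift_id, Cardinal.lift_id]
      _ ≤ (ℵ₀ ⊔ Cardinal.mk s) * (ℵ₀ ⊔ Cardinal.mk s) := mul_le_mul' h1 h2
      _ = ℵ₀ ⊔ Cardinal.mk s := Cardinal.mul_eq_self le_sup_left
  calc (Cardinal.sum fun n : ULift.{u} ℕ =>
          Cardinal.mk ((Fin n.down → ULift.{u} ℚ) × (Fin n.down → s)))
      ≤ Cardinal.sum fun _ : ULift.{u} ℕ => (ℵ₀ ⊔ Cardinal.mk s) := Cardinal.sum_le_sum _ _ hbound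
    _ = Cardinal.mk (ULift.{u} ℕ) * (ℵ₀ ⊔ Cardinal.mk s) := Cardinal.sum_const' _ _
    _ = ℵ₀ * (ℵ₀ ⊔ Cardinal.mk s) := by rw [Cardinal.mk_uLift, Cardinal.mk_nat, Cardinal.lift_aleph0]
    _ = ℵ₀ ⊔ Cardinal.mk s := Cardinal.aleph0_mul_eq le_sup_left

end Aux
section Aux2

variable {Y : Type u} [SeminormedAddCommGroup Y] [NormedSpace ℝ Y]

lemma smul_mem_closure_ratCombos {s : Set Y} (r : ℝ) {x : Y}
    (hx : x ∈ closure (ratCombos s)) : r • x ∈ closure (ratCombos s) := by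
  obtain ⟨g, hg, hgx⟩ := mem_closure_iff_seq_limit.mp hx
  have hq : ∀ n : ℕ, ∃ q : ℚ, |r - (q : ℝ)| < 1 / (n + 1) := fun n =>
    exists_rat_near r (by positivity)
  choose q hq using hq
  have hqr : Filter.Tendsto (fun n => (q n : ℝ)) Filter.atTop (nhds r) := by
    rw [tendsto_iff_dist_tendsto_zero]
    refine squeeze_zero (fun n => dist_nonneg) (fun n => ?_)
      tendsto_one_div_add_atTop_nhds_zero_nat
    rw [Real.dist_eq, abs_sub_comm]
    exact (hq n).le
  refine mem_closure_of_tendsto ((hqr.smul hgx)) ?_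
  filter_upwards with n
  exact ratSMul_mem_ratCombos (q n) (hg n)

/-- The closure of `ratCombos s` is a submodule. -/
def ratCombosClosure (s : Set Y) : Submodule ℝ Y where
  carrier := closure (ratCombos s)
  zero_mem' := subset_closure (zero_mem_ratCombos s)
  add_mem' := fun ha hb =>
    map_mem_closure₂ continuous_add ha hb fun _ hx _ hy => add_mem_ratCombos hx hy
  smul_mem' := fun r _ hx => smul_mem_closure_ratCombos r hx

lemma closure_ratCombos_eq_univ {s : Set Y}
    (hs : closure (Submodule.span ℝ s : Set Y) = Set.univ) :
    closure (ratCombos s) = Set.univ := by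
  have hle : Submodule.span ℝ s ≤ ratCombosClosure s :=
    Submodule.span_le.mpr fun x hx => subset_closure (mem_ratCombos_of_mem hx)
  have hcl : closure (Submodule.span ℝ s : Set Y) ⊆ closure (ratCombos s) := by
    have : closure (ratCombosClosure s : Set Y) = (ratCombosClosure s : Set Y) :=
      isClosed_closure.closure_eq
    calc closure (Submodule.span ℝ s : Set Y) ⊆ closure (ratCombosClosure s : Set Y) :=
          closure_mono hle
      _ = (ratCombosClosure s : Set Y) := this
      _ = closure (ratCombos s) := rfl
  exact Set.eq_univ_of_univ_subset (hs ▸ hcl)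

lemma spanDim_le_mk (Y : Type u) [SeminormedAddCommGroup Y] [NormedSpace ℝ Y] :
    spanDim Y ≤ Cardinal.mk Y :=
  csInf_le (OrderBot.bddBelow _) ⟨Set.univ, by simp, Cardinal.mk_univ⟩

lemma exists_spanning_set (Y : Type u) [SeminormedAddCommGroup Y] [NormedSpace ℝ Y] :
    ∃ s : Set Y, closure (Submodule.span ℝ s : Set Y) = Set.univ ∧
      Cardinal.mk s = spanDim Y := by
  have hne : {c : Cardinal | ∃ s : Set Y,
      closure (Submodule.span ℝ s : Set Y) = Set.univ ∧ Cardinal.mk s = c}.Nonempty :=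
    ⟨Cardinal.mk Y, Set.univ, by simp, Cardinal.mk_univ⟩
  exact csInf_mem hne

/-- A `δ`-separated set has cardinality at most that of any topologically spanning set. -/
lemma mk_separated_le {T t : Set Y} (ht : closure t = Set.univ) {δ : ℝ} (hδ : 0 < δ)
    (hsep : ∀ x ∈ T, ∀ y ∈ T, x ≠ y → δ ≤ dist x y) :
    Cardinal.mk T ≤ Cardinal.mk t := by
  have hpick : ∀ x : T, ∃ y : t, dist (x : Y) (y : Y) < δ / 2 := by
    intro x
    have hx : (x : Y) ∈ closure t := by rw [ht]; trivial
    obtain ⟨y, hy, hxy⟩ := Metric.mem_closure_iff.mp hx (δ / 2) (by positivity)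
    exact ⟨⟨y, hy⟩, hxy⟩
  choose c hc using hpick
  refine Cardinal.mk_le_of_injective (f := c) ?_
  intro x y hxy
  by_contra hne
  have h1 : δ ≤ dist (x : Y) (y : Y) :=
    hsep x x.2 y y.2 (fun h => hne (Subtype.ext h))
  have h2 : dist (x : Y) (y : Y) ≤ dist (x : Y) (c x : Y) + dist (y : Y) (c y : Y) := by
    calc dist (x : Y) (y : Y) ≤ dist (x : Y) (c x : Y) + dist (c x : Y) (y : Y) :=
          dist_triangle _ _ _
      _ = dist (x : Y) (c x : Y) + dist (y : Y) (c y : Y) := by rw [hxy]; simp [dist_comm]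
  linarith [hc x, hc y]

end Aux2
section Aux3

variable {Y : Type u} [SeminormedAddCommGroup Y] [NormedSpace ℝ Y]

lemma mk_le_pow_aleph0 (Z : Type u) [NormedAddCommGroup Z] {t : Set Z}
    (ht : closure t = Set.univ) (h0 : t.Nonempty) :
    Cardinal.mk Z ≤ Cardinal.mk t ^ (ℵ₀ : Cardinal.{u}) := by
  have hpick : ∀ (x : Z) (n : ℕ), ∃ y : t, dist x (y : Z) < 1 / (n + 1) := by
    intro x n
    have hx : x ∈ closure t := by rw [ht]; trivial
    obtain ⟨y, hy, hxy⟩ := Metric.mem_closure_iff.mp hx (1 / (n + 1)) (by positivity)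
    exact ⟨⟨y, hy⟩, hxy⟩
  choose c hc using hpick
  have hinj : Function.Injective c := by
    intro x y hxy
    have hx : Filter.Tendsto (fun n => ((c x n : Z))) Filter.atTop (nhds x) := by
      rw [tendsto_iff_dist_tendsto_zero]
      exact squeeze_zero (fun n => dist_nonneg)
        (fun n => by rw [dist_comm]; exact (hc x n).le)
        tendsto_one_div_add_atTop_nhds_zero_nat
    have hy : Filter.Tendsto (fun n => ((c x n : Z))) Filter.atTop (nhds y) := by
      rw [hxy]
      rw [tendsto_iff_dist_tendsto_zero]
      exact squeeze_zero (fun n => dist_nonneg)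
        (fun n => by rw [dist_comm]; exact (hc y n).le)
        tendsto_one_div_add_atTop_nhds_zero_nat
    exact tendsto_nhds_unique hx hy
  calc Cardinal.mk Z ≤ Cardinal.mk (ℕ → t) := Cardinal.mk_le_of_injective hinj
    _ = Cardinal.mk t ^ (ℵ₀ : Cardinal.{u}) := by
        rw [Cardinal.mk_arrow]; simp

/-- There is a `1/2`-separated subset of the unit ball whose closed span is everything. -/
lemma exists_separated_spanning (Y : Type u) [SeminormedAddCommGroup Y] [NormedSpace ℝ Y] :
    ∃ T : Set Y, (∀ x ∈ T, ‖x‖ ≤ 1) ∧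
      (∀ x ∈ T, ∀ y ∈ T, x ≠ y → (1 / 2 : ℝ) ≤ dist x y) ∧ spanDim Y ≤ Cardinal.mk T := by
  set S : Set (Set Y) := {T | (∀ x ∈ T, ‖x‖ ≤ 1) ∧
    ∀ x ∈ T, ∀ y ∈ T, x ≠ y → (1 / 2 : ℝ) ≤ dist x y} with hS
  obtain ⟨T, hTS, hTmax⟩ : ∃ T, T ∈ S ∧ ∀ U ∈ S, T ⊆ U → U = T := by
    obtain ⟨T, hT⟩ := zorn_subset S (by
      intro ch hch hchain
      refine ⟨⋃₀ ch, ⟨?_, ?_⟩, fun s hs => Set.subset_sUnion_of_mem hs⟩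
      · rintro x ⟨A, hA, hxA⟩
        exact ((hch hA).1 x hxA)
      · rintro x ⟨A, hA, hxA⟩ y ⟨B, hB, hyB⟩ hxy
        rcases hchain.total hA hB with h | h
        · exact (hch hB).2 x (h hxA) y hyB hxy
        · exact (hch hA).2 x hxA y (h hyB) hxy)
    exact ⟨T, hT.1, fun U hU hTU => (hT.2 hU hTU).antisymm hTU⟩
  refine ⟨T, hTS.1, hTS.2, ?_⟩
  -- maximality: every point of the unit ball is within 1/2 of T
  have hnet : ∀ b : Y, ‖b‖ ≤ 1 → ∃ x ∈ T, dist b x < 1 / 2 := by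
    intro b hb
    by_contra hcon
    push_neg at hcon
    have hbT : b ∉ T := fun hbT => by
      have := hcon b hbT
      rw [dist_self] at this
      linarith
    have : insert b T ∈ S := by
      constructor
      · rintro x (rfl | hx)
        · exact hb
        · exact hTS.1 x hx
      · rintro x (rfl | hx) y (rfl | hy) hxy
        · exact absurd rfl hxy
        · exact hcon y hy
        · rw [dist_comm]; exact hcon x hx
        · exact hTS.2 x hx y hy hxy
    have := hTmax _ this (Set.subset_insert b T)
    exact hbT (this ▸ Set.mem_insert b T)
  -- hence the span of T is dense
  have hstep : ∀ x : Y, ∃ y ∈ Submodule.span ℝ T, ‖x - y‖ ≤ 2⁻¹ * ‖x‖ := by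
    intro x
    rcases le_or_gt ‖x‖ 0 with hx | hx
    · refine ⟨0, Submodule.zero_mem _, ?_⟩
      have h0 : ‖x‖ = 0 := le_antisymm hx (norm_nonneg x)
      simp [h0]
    · set b := ‖x‖⁻¹ • x with hb
      have hbn : ‖b‖ ≤ 1 := by
        rw [hb, norm_smul, norm_inv, norm_norm, inv_mul_cancel₀ hx.ne']
      obtain ⟨t, htT, hbt⟩ := hnet b hbn
      refine ⟨‖x‖ • t, Submodule.smul_mem _ _ (Submodule.subset_span htT), ?_⟩
      have hxb : ‖x‖ • b = x := by
        rw [hb, smul_smul, mul_inv_cancel₀ hx.ne', one_smul]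
      calc ‖x - ‖x‖ • t‖ = ‖‖x‖ • (b - t)‖ := by rw [smul_sub, hxb]
        _ = ‖x‖ * ‖b - t‖ := by rw [norm_smul, norm_norm]
        _ ≤ ‖x‖ * 2⁻¹ := by
            refine mul_le_mul_of_nonneg_left ?_ (norm_nonneg x)
            rw [← dist_eq_norm]
            linarith
        _ = 2⁻¹ * ‖x‖ := mul_comm _ _
  have hiter : ∀ (n : ℕ) (x : Y), ∃ y ∈ Submodule.span ℝ T, ‖x - y‖ ≤ (2⁻¹ : ℝ) ^ n * ‖x‖ := by
    intro n
    induction n with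
    | zero => intro x; exact ⟨0, Submodule.zero_mem _, by simp⟩
    | succ n ih =>
      intro x
      obtain ⟨y, hy, hxy⟩ := ih x
      obtain ⟨z, hz, hxz⟩ := hstep (x - y)
      refine ⟨y + z, Submodule.add_mem _ hy hz, ?_⟩
      have : x - (y + z) = x - y - z := by abel
      rw [this, pow_succ, mul_comm ((2⁻¹:ℝ)^n), mul_assoc]
      calc ‖x - y - z‖ ≤ 2⁻¹ * ‖x - y‖ := hxz
        _ ≤ 2⁻¹ * ((2⁻¹ : ℝ) ^ n * ‖x‖) := by
            refine mul_le_mul_of_nonneg_left hxy (by norm_num)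
  have hcl : closure (Submodule.span ℝ T : Set Y) = Set.univ := by
    refine Set.eq_univ_of_forall fun x => ?_
    refine Metric.mem_closure_iff.mpr fun ε hε => ?_
    obtain ⟨n, hn⟩ : ∃ n : ℕ, (2⁻¹ : ℝ) ^ n * ‖x‖ < ε := by
      rcases le_or_gt ‖x‖ 0 with hx | hx
      · exact ⟨0, by nlinarith [norm_nonneg x, le_antisymm hx (norm_nonneg x)]⟩
      · obtain ⟨n, hn⟩ := exists_pow_lt_of_lt_one (div_pos hε hx) (by norm_num : (2⁻¹:ℝ) < 1)
        exact ⟨n, by rw [← lt_div_iff₀ hx]; exact hn⟩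
    obtain ⟨y, hy, hxy⟩ := hiter n x
    exact ⟨y, hy, by rw [dist_eq_norm]; exact lt_of_le_of_lt hxy hn⟩
  exact csInf_le (OrderBot.bddBelow _) ⟨T, hcl, rfl⟩

end Aux3
section Aux4

set_option linter.unusedSectionVars false

lemma aleph0_le_spanDim (X : Type u) [NormedAddCommGroup X] [NormedSpace ℝ X]
    [CompleteSpace X] (hinf : ¬ FiniteDimensional ℝ X) : ℵ₀ ≤ spanDim X := by
  by_contra hlt
  push_neg at hlt
  obtain ⟨s, hs_cl, hs_mk⟩ := exists_spanning_set X
  have hfin : s.Finite := by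
    rw [← Cardinal.lt_aleph0_iff_set_finite, hs_mk]
    exact hlt
  have hfd : FiniteDimensional ℝ (Submodule.span ℝ s) := FiniteDimensional.span_of_finite ℝ hfin
  have hclosed : IsClosed (Submodule.span ℝ s : Set X) :=
    Submodule.closed_of_finiteDimensional _
  have huniv : (Submodule.span ℝ s : Set X) = Set.univ := by
    rw [← hclosed.closure_eq, hs_cl]
  have htop : Submodule.span ℝ s = ⊤ :=
    Submodule.eq_top_iff'.mpr fun x => by rw [← SetLike.mem_coe, huniv]; trivial
  rw [htop] at hfd
  exact hinf (Module.Finite.equiv (Submodule.topEquiv))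

/-- Lower bound for the quotient norm in the ultrapower: if the coordinates of `w` have norm
at least `δ` on a set in `D`, then the image of `w` in the ultrapower has norm at least `δ`. -/
lemma le_norm_ultrapower_mk {I : Type u} (D : Ultrafilter I) (X : Type u)
    [NormedAddCommGroup X] [NormedSpace ℝ X]
    (w : lp (fun _ : I => X) ∞) {δ : ℝ}
    (hw : {i | δ ≤ ‖w i‖} ∈ D) :
    δ ≤ ‖(Submodule.Quotient.mk w : Ultrapower D X)‖ := by
  refine le_of_forall_pos_le_add fun ε hε => ?_
  obtain ⟨m, hm_eq, hm_norm⟩ :=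
    Submodule.Quotient.norm_mk_lt (Submodule.Quotient.mk w : Ultrapower D X) (half_pos hε)
  have hmw : m - w ∈ ultraNull D X := by
    rw [← Submodule.Quotient.eq]
    exact hm_eq
  have htend : Filter.Tendsto (fun i => ‖(m - w) i‖) (D : Filter I) (nhds 0) := hmw
  have hsmall : {i | ‖(m - w) i‖ < ε / 2} ∈ D := by
    have := Metric.tendsto_nhds.mp htend (ε / 2) (half_pos hε)
    refine Filter.mem_of_superset this fun i hi => ?_
    simp only [Real.dist_eq, sub_zero, Set.mem_setOf_eq] at hi ⊢
    calc ‖(m - w) i‖ ≤ |‖(m - w) i‖| := le_abs_self _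
      _ < ε / 2 := hi
  obtain ⟨i, hi1, hi2⟩ := Ultrafilter.nonempty_of_mem (Filter.inter_mem hw hsmall)
  have hcoe : (m - w) i = m i - w i := by
    rw [lp.coeFn_sub]; rfl
  have h1 : δ ≤ ‖w i‖ := hi1
  have h2 : ‖(m - w) i‖ < ε / 2 := hi2
  have h3 : ‖m i‖ ≤ ‖m‖ := lp.norm_apply_le_norm ENNReal.top_ne_zero m i
  have h4 : ‖w i‖ ≤ ‖m i‖ + ‖(m - w) i‖ := by
    rw [hcoe]
    calc ‖w i‖ = ‖m i - (m i - w i)‖ := by rw [sub_sub_cancel]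
      _ ≤ ‖m i‖ + ‖m i - w i‖ := norm_sub_le _ _
  linarith

end Aux4

/-- If `X` is an infinite-dimensional Banach space with `dim X = κ` and `D` is a
`τ`-regular ultrafilter on a set `I` of cardinality `τ`, then `dim (X)_D = κ ^ τ`. -/
theorem spanDim_ultrapower_of_regular
    (X : Type u) [NormedAddCommGroup X] [NormedSpace ℝ X] [CompleteSpace X]
    (hinf : ¬ FiniteDimensional ℝ X)
    (κ : Cardinal.{u}) (hκ : spanDim X = κ)
    (τ : Cardinal.{u}) (hτ : Cardinal.aleph0 ≤ τ)
    (I : Type u) (hI : Cardinal.mk I = τ)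
    (D : Ultrafilter I) (hD : IsRegularUltrafilter D τ) :
    spanDim (Ultrapower D X) = κ ^ τ := by
  subst hκ
  subst hI
  have hκ0 : ℵ₀ ≤ spanDim X := aleph0_le_spanDim X hinf
  -- Upper bound
  obtain ⟨s, hs_cl, hs_mk⟩ := exists_spanning_set X
  have hts : closure (ratCombos s) = Set.univ := closure_ratCombos_eq_univ hs_cl
  have htmk : Cardinal.mk (ratCombos s) ≤ spanDim X :=
    (mk_ratCombos_le s).trans (by rw [hs_mk]; exact sup_le hκ0 le_rfl)
  have hXmk : Cardinal.mk X ≤ spanDim X ^ (ℵ₀ : Cardinal.{u}) :=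
    (mk_le_pow_aleph0 X hts ⟨0, zero_mem_ratCombos s⟩).trans
      (Cardinal.power_le_power_right htmk)
  have upper : spanDim (Ultrapower D X) ≤ spanDim X ^ Cardinal.mk I := by
    have h1 : Cardinal.mk (Ultrapower D X) ≤ Cardinal.mk (lp (fun _ : I => X) ∞) :=
      Cardinal.mk_le_of_surjective (Submodule.Quotient.mk_surjective (ultraNull D X))
    have h2 : Cardinal.mk (lp (fun _ : I => X) ∞) ≤ Cardinal.mk (I → X) :=
      Cardinal.mk_le_of_injective (f := fun f => (f : ∀ _ : I, X)) fun f g h => lp.ext h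
    have h3 : Cardinal.mk (I → X) = Cardinal.mk X ^ Cardinal.mk I :=
      (Cardinal.power_def X I).symm
    have h4 : Cardinal.mk X ^ Cardinal.mk I
        ≤ (spanDim X ^ (ℵ₀ : Cardinal.{u})) ^ Cardinal.mk I :=
      Cardinal.power_le_power_right hXmk
    have h5 : (spanDim X ^ (ℵ₀ : Cardinal.{u})) ^ Cardinal.mk I
        = spanDim X ^ Cardinal.mk I := by
      rw [← Cardinal.power_mul, Cardinal.mul_eq_right hτ hτ Cardinal.aleph0_ne_zero]
    calc spanDim (Ultrapower D X) ≤ Cardinal.mk (Ultrapower D X) := spanDim_le_mk _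
      _ ≤ Cardinal.mk (lp (fun _ : I => X) ∞) := h1
      _ ≤ Cardinal.mk (I → X) := h2
      _ = Cardinal.mk X ^ Cardinal.mk I := h3
      _ ≤ (spanDim X ^ (ℵ₀ : Cardinal.{u})) ^ Cardinal.mk I := h4
      _ = spanDim X ^ Cardinal.mk I := h5
  -- Lower bound
  obtain ⟨T, hT1, hTsep, hTκ⟩ := exists_separated_spanning X
  have hTinf : ℵ₀ ≤ Cardinal.mk T := hκ0.trans hTκ
  obtain ⟨G, hGD, hGτ, hGfin⟩ := hD
  have hfin : ∀ i : I, Finite {A : ↥G // i ∈ (A : Set I)} := by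
    intro i
    haveI := (hGfin i).to_subtype
    refine Finite.of_injective
      (fun A : {A : ↥G // i ∈ (A : Set I)} =>
        (⟨A.1.1, A.1.2, A.2⟩ : ↥{A | A ∈ G ∧ i ∈ A})) ?_
    intro A B hAB
    simp only [Subtype.mk.injEq] at hAB
    exact Subtype.ext (Subtype.ext hAB)
  have hchoice : ∀ i : I, Nonempty (({A : ↥G // i ∈ (A : Set I)} → ↥T) ↪ ↥T) := by
    intro i
    haveI := hfin i
    rw [← Cardinal.le_def]
    obtain ⟨n, hn⟩ :=
      Cardinal.lt_aleph0.mp (Cardinal.lt_aleph0_of_finite {A : ↥G // i ∈ (A : Set I)})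
    rw [← Cardinal.power_def, hn]
    exact_mod_cast Cardinal.power_nat_le hTinf
  have e := fun i => (hchoice i).some
  have hbdd : ∀ f : ↥G → ↥T,
      Memℓp (fun i : I => ((e i) (fun B => f B.1) : X)) ∞ := by
    intro f
    refine memℓp_infty ⟨1, ?_⟩
    rintro - ⟨i, rfl⟩
    exact hT1 _ (Subtype.mem _)
  set y : (↥G → ↥T) → lp (fun _ : I => X) ∞ := fun f => ⟨_, hbdd f⟩ with hy
  set Φ : (↥G → ↥T) → Ultrapower D X := fun f => Submodule.Quotient.mk (y f) with hΦ
  have hsepΦ : ∀ f g : ↥G → ↥T, f ≠ g → (1 / 2 : ℝ) ≤ ‖Φ f - Φ g‖ := by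
    intro f g hfg
    obtain ⟨A, hA⟩ := Function.ne_iff.mp hfg
    have hAD : (A : Set I) ∈ D := hGD A.1 A.2
    have hsub : (A : Set I) ⊆ {i | (1 / 2 : ℝ) ≤ ‖(y f - y g) i‖} := by
      intro i hi
      have hne : (fun B : {A : ↥G // i ∈ (A : Set I)} => f B.1)
          ≠ (fun B => g B.1) := fun h => hA (congrFun h ⟨A, hi⟩)
      have hneT : (e i) (fun B => f B.1) ≠ (e i) (fun B => g B.1) :=
        fun h => hne ((e i).injective h)
      have hd := hTsep _ (Subtype.mem ((e i) (fun B => f B.1)))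
        _ (Subtype.mem ((e i) (fun B => g B.1))) (fun h => hneT (Subtype.ext h))
      show (1 / 2 : ℝ) ≤ ‖(y f - y g) i‖
      have hcoe : (y f - y g) i = y f i - y g i := by rw [lp.coeFn_sub]; rfl
      rw [hcoe]
      rw [dist_eq_norm] at hd
      exact hd
    have hmem : {i | (1 / 2 : ℝ) ≤ ‖(y f - y g) i‖} ∈ D :=
      Filter.mem_of_superset hAD hsub
    have := le_norm_ultrapower_mk D X (y f - y g) hmem
    rwa [Submodule.Quotient.mk_sub] at this
  have hΦinj : Function.Injective Φ := by
    intro f g h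
    by_contra hne
    have := hsepΦ f g hne
    rw [h, sub_self, norm_zero] at this
    linarith
  obtain ⟨s', hs'cl, hs'mk⟩ := exists_spanning_set (Ultrapower D X)
  have hts' : closure (ratCombos s') = Set.univ := closure_ratCombos_eq_univ hs'cl
  have hΛsep : ∀ x ∈ Set.range Φ, ∀ z ∈ Set.range Φ, x ≠ z → (1 / 2 : ℝ) ≤ dist x z := by
    rintro - ⟨f, rfl⟩ - ⟨g, rfl⟩ hne
    rw [dist_eq_norm]
    exact hsepΦ f g fun h => hne (congrArg Φ h)
  have hΛle : Cardinal.mk (Set.range Φ) ≤ Cardinal.mk (ratCombos s') :=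
    mk_separated_le hts' (by norm_num) hΛsep
  have hΛeq : Cardinal.mk (Set.range Φ) = Cardinal.mk T ^ Cardinal.mk I := by
    rw [Cardinal.mk_range_eq _ hΦinj, ← Cardinal.power_def, hGτ]
  have hlow : spanDim X ^ Cardinal.mk I ≤ ℵ₀ ⊔ spanDim (Ultrapower D X) := by
    calc spanDim X ^ Cardinal.mk I ≤ Cardinal.mk T ^ Cardinal.mk I :=
          Cardinal.power_le_power_right hTκ
      _ = Cardinal.mk (Set.range Φ) := hΛeq.symm
      _ ≤ Cardinal.mk (ratCombos s') := hΛle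
      _ ≤ ℵ₀ ⊔ Cardinal.mk s' := mk_ratCombos_le s'
      _ = ℵ₀ ⊔ spanDim (Ultrapower D X) := by rw [hs'mk]
  have haleph : ℵ₀ < spanDim X ^ Cardinal.mk I := by
    calc ℵ₀ ≤ Cardinal.mk I := hτ
      _ < 2 ^ Cardinal.mk I := Cardinal.cantor _
      _ ≤ spanDim X ^ Cardinal.mk I := by
          refine Cardinal.power_le_power_right ?_
          refine le_trans ?_ hκ0
          exact_mod_cast (Cardinal.nat_lt_aleph0 2).le
  have lower : spanDim X ^ Cardinal.mk I ≤ spanDim (Ultrapower D X) := by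
    rcases le_sup_iff.mp hlow with h | h
    · exact absurd h (not_le.mpr haleph)
    · exact h
  exact le_antisymm upper lower
end
end

section
/- For every infinite-dimensional real Banach space X and every countably incomplete ultrafilter D, the dimension of the ultrapower satisfies dim((X)_D) = (dim((X)_D))^ω, i.e. dim((X)_D) raised to the countable power equals itself. -/
open Cardinal Filter
open scoped ENNReal

universe u v

noncomputable section

section MetricAux

variable {α : Type*} [PseudoMetricSpace α]

/-- A separated set injects into any dense-enough set. -/
lemma sep_card_le {W R : Set α} {ε : ℝ} (hε : 0 < ε)
    (hsep : ∀ a ∈ W, ∀ b ∈ W, a ≠ b → ε ≤ dist a b)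
    (hR : ∀ y : α, ∃ r ∈ R, dist y r < ε / 2) :
    Cardinal.mk W ≤ Cardinal.mk R := by
  have hch : ∀ w : W, ∃ r : R, dist (w : α) (r : α) < ε / 2 := by
    intro w
    obtain ⟨r, hr, hd⟩ := hR (w : α)
    exact ⟨⟨r, hr⟩, hd⟩
  choose F hF using hch
  refine Cardinal.mk_le_of_injective (f := F) ?_
  intro a b hab
  by_contra hne
  have hne' : (a : α) ≠ (b : α) := fun h => hne (Subtype.ext h)
  have h1 := hsep a a.2 b b.2 hne'
  have h2 := hF a
  have h3 := hF b
  rw [hab] at h2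
  have : dist (a : α) (b : α) ≤ dist (a : α) (F b : α) + dist (b : α) (F b : α) :=
    dist_triangle_right _ _ _
  linarith

/-- Existence of a maximal `ε`-separated subset of `s`; it is automatically an `ε`-net. -/
lemma exists_max_sep (s : Set α) {ε : ℝ} (hε : 0 < ε) :
    ∃ M : Set α, M ⊆ s ∧ (∀ a ∈ M, ∀ b ∈ M, a ≠ b → ε ≤ dist a b) ∧
      ∀ x ∈ s, ∃ m ∈ M, dist x m < ε := by
  have hz : ∀ c ⊆ {M : Set α | M ⊆ s ∧ ∀ a ∈ M, ∀ b ∈ M, a ≠ b → ε ≤ dist a b},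
      IsChain (· ⊆ ·) c → ∃ ub ∈ {M : Set α | M ⊆ s ∧ ∀ a ∈ M, ∀ b ∈ M, a ≠ b → ε ≤ dist a b},
        ∀ s ∈ c, s ⊆ ub := by
    intro c hcS hchain
    refine ⟨⋃₀ c, ⟨?_, ?_⟩, fun t ht => Set.subset_sUnion_of_mem ht⟩
    · exact Set.sUnion_subset fun t ht => (hcS ht).1
    · rintro a ⟨ta, hta, haa⟩ b ⟨tb, htb, hbb⟩ hne
      rcases hchain.total hta htb with h | h
      · exact (hcS htb).2 a (h haa) b hbb hne
      · exact (hcS hta).2 a haa b (h hbb) hne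
  obtain ⟨M, hM⟩ := zorn_subset
      {M : Set α | M ⊆ s ∧ ∀ a ∈ M, ∀ b ∈ M, a ≠ b → ε ≤ dist a b} hz
  · refine ⟨M, hM.prop.1, hM.prop.2, ?_⟩
    intro x hx
    by_contra hcon
    push_neg at hcon
    have hxsep : insert x M ∈
        {M : Set α | M ⊆ s ∧ ∀ a ∈ M, ∀ b ∈ M, a ≠ b → ε ≤ dist a b} := by
      constructor
      · exact Set.insert_subset hx hM.prop.1
      · intro a ha b hb hne
        rcases Set.mem_insert_iff.1 ha with rfl | haM
        · rcases Set.mem_insert_iff.1 hb with rfl | hbM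
          · exact absurd rfl hne
          · exact hcon b hbM
        · rcases Set.mem_insert_iff.1 hb with rfl | hbM
          · rw [dist_comm]; exact hcon a haM
          · exact hM.prop.2 a haM b hbM hne
    have hsub : insert x M ⊆ M := hM.2 hxsep (Set.subset_insert x M)
    have hxM : x ∈ M := hsub (Set.mem_insert x M)
    have h0 := hcon x hxM
    rw [dist_self] at h0
    linarith

end MetricAux

section SpanAux

variable {E : Type*} [SeminormedAddCommGroup E] [NormedSpace ℝ E]

/-- Riesz lemma for seminormed spaces, normalized form. -/
lemma riesz_semi {F : Submodule ℝ E} (hFc : IsClosed (F : Set E)) {x : E} (hx : x ∉ F) :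
    ∃ z : E, ‖z‖ = 1 ∧ ∀ y ∈ F, (1 : ℝ) / 2 ≤ ‖z - y‖ := by
  have hFn : (F : Set E).Nonempty := ⟨0, F.zero_mem⟩
  have hdp : 0 < Metric.infDist x F := (hFc.notMem_iff_infDist_pos hFn).1 hx
  set d := Metric.infDist x F with hd
  obtain ⟨y₀, hy₀, hxy₀⟩ := (Metric.infDist_lt_iff hFn).1
    (show Metric.infDist x (F : Set E) < (3 / 2) * d by rw [← hd]; nlinarith)
  rw [dist_eq_norm] at hxy₀
  have hxy0_pos : 0 < ‖x - y₀‖ := by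
    have h1 : d ≤ dist x y₀ := Metric.infDist_le_dist_of_mem hy₀
    rw [dist_eq_norm] at h1
    linarith
  refine ⟨‖x - y₀‖⁻¹ • (x - y₀), ?_, ?_⟩
  · rw [norm_smul, norm_inv, Real.norm_eq_abs, abs_of_pos hxy0_pos,
      inv_mul_cancel₀ hxy0_pos.ne']
  · intro y hy
    have hmem : y₀ + ‖x - y₀‖ • y ∈ F := F.add_mem hy₀ (F.smul_mem _ hy)
    have h1 : d ≤ ‖x - (y₀ + ‖x - y₀‖ • y)‖ := by
      have h2 : d ≤ dist x (y₀ + ‖x - y₀‖ • y) := Metric.infDist_le_dist_of_mem hmem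
      rwa [dist_eq_norm] at h2
    have hcc : ‖x - y₀‖⁻¹ * ‖x - y₀‖ = 1 := inv_mul_cancel₀ hxy0_pos.ne'
    have heq : ‖x - y₀‖⁻¹ • (x - y₀) - y = ‖x - y₀‖⁻¹ • (x - (y₀ + ‖x - y₀‖ • y)) := by
      simp only [sub_add_eq_sub_sub, smul_sub, smul_smul, hcc, one_smul]
    rw [heq, norm_smul, norm_inv, Real.norm_eq_abs, abs_of_pos hxy0_pos]
    rw [le_inv_mul_iff₀ hxy0_pos]
    nlinarith

/-- Every seminormed real vector space has a `1/4`-separated subset of the unit sphere whose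
closed span is everything. -/
lemma exists_sep_spanning (E : Type*) [SeminormedAddCommGroup E] [NormedSpace ℝ E] :
    ∃ T : Set E, (∀ t ∈ T, ‖t‖ = 1) ∧
      (∀ a ∈ T, ∀ b ∈ T, a ≠ b → (1 : ℝ) / 4 ≤ dist a b) ∧
      closure ((Submodule.span ℝ T : Submodule ℝ E) : Set E) = Set.univ := by
  obtain ⟨T, hTs, hTsep, hTnet⟩ :=
    exists_max_sep ({y : E | ‖y‖ = 1}) (by norm_num : (0 : ℝ) < 1 / 4)
  refine ⟨T, fun t ht => hTs ht, hTsep, ?_⟩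
  by_contra hne
  obtain ⟨x, hx⟩ := (Set.ne_univ_iff_exists_notMem _).1 hne
  have hclosed : IsClosed (((Submodule.span ℝ T).topologicalClosure : Submodule ℝ E) : Set E) := by
    rw [Submodule.topologicalClosure_coe]
    exact isClosed_closure
  have hxmem : x ∉ (Submodule.span ℝ T).topologicalClosure := by
    intro hmem
    exact hx (by rwa [← SetLike.mem_coe, Submodule.topologicalClosure_coe] at hmem)
  obtain ⟨z, hz1, hz2⟩ := riesz_semi hclosed hxmem
  obtain ⟨m, hm, hmd⟩ := hTnet z hz1
  have hmmem : m ∈ (Submodule.span ℝ T).topologicalClosure := by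
    rw [← SetLike.mem_coe, Submodule.topologicalClosure_coe]
    exact subset_closure (Submodule.subset_span hm)
  have := hz2 m hmmem
  rw [dist_eq_norm] at hmd
  linarith

/-- From a spanning set one obtains a dense set of rational combinations,
with controlled cardinality. -/
lemma exists_dense_card {B : Set E}
    (hB : closure ((Submodule.span ℝ B : Submodule ℝ E) : Set E) = Set.univ) :
    ∃ R : Set E, (∀ y : E, ∀ ε : ℝ, 0 < ε → ∃ r ∈ R, dist y r < ε) ∧
      Cardinal.mk R ≤ max (Cardinal.mk B) Cardinal.aleph0 := by
  classical
  set g : List (ℚ × B) → E := fun l => (l.map fun p => (p.1 : ℝ) • (p.2 : E)).sum with hg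
  refine ⟨Set.range g, ?_, ?_⟩
  · have hsub : ((Submodule.span ℝ B : Submodule ℝ E) : Set E) ⊆ closure (Set.range g) := by
      intro y hy
      rw [SetLike.mem_coe, Submodule.mem_span_set'] at hy
      obtain ⟨n, c, w, hsum⟩ := hy
      rw [Metric.mem_closure_iff]
      intro ε hε
      set S : ℝ := ∑ i, ‖(w i : E)‖ with hS
      have hS0 : 0 ≤ S := Finset.sum_nonneg fun _ _ => norm_nonneg _
      have hδ : 0 < ε / (S + 1) := by positivity
      have hq : ∀ i : Fin n, ∃ q : ℚ, |c i - (q : ℝ)| < ε / (S + 1) :=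
        fun i => exists_rat_near _ hδ
      choose q hq using hq
      refine ⟨g (List.ofFn fun i => (q i, w i)), ⟨_, rfl⟩, ?_⟩
      have hgl : g (List.ofFn fun i => (q i, w i)) = ∑ i, (q i : ℝ) • (w i : E) := by
        rw [hg]
        simp only [List.map_ofFn]
        exact List.sum_ofFn
      rw [hgl, dist_eq_norm, ← hsum]
      have hdiff : (∑ i, c i • (w i : E)) - ∑ i, (q i : ℝ) • (w i : E)
          = ∑ i, (c i - (q i : ℝ)) • (w i : E) := by
        rw [← Finset.sum_sub_distrib]
        exact Finset.sum_congr rfl fun i _ => (sub_smul _ _ _).symm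
      rw [hdiff]
      calc ‖∑ i, (c i - (q i : ℝ)) • (w i : E)‖
          ≤ ∑ i, ‖(c i - (q i : ℝ)) • (w i : E)‖ := norm_sum_le _ _
        _ ≤ ∑ i, (ε / (S + 1)) * ‖(w i : E)‖ := by
            refine Finset.sum_le_sum fun i _ => ?_
            rw [norm_smul, Real.norm_eq_abs]
            exact mul_le_mul_of_nonneg_right (le_of_lt (hq i)) (norm_nonneg _)
        _ = (ε / (S + 1)) * S := by rw [← Finset.mul_sum]
        _ < ε := by
            rw [div_mul_eq_mul_div, div_lt_iff₀ (by positivity)]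
            nlinarith
    intro y ε hε
    have hyc : y ∈ closure (Set.range g) := by
      have hy : y ∈ closure ((Submodule.span ℝ B : Submodule ℝ E) : Set E) := by
        rw [hB]; trivial
      exact closure_minimal hsub isClosed_closure hy
    exact Metric.mem_closure_iff.1 hyc ε hε
  · refine le_trans Cardinal.mk_range_le ?_
    rcases isEmpty_or_nonempty (ℚ × B) with hE | hNE
    · have : Countable (List (ℚ × B)) := inferInstance
      exact le_trans (Cardinal.mk_le_aleph0_iff.2 this) (le_max_right _ _)
    · rw [Cardinal.mk_list_eq_max_mk_aleph0]
      refine max_le ?_ (le_max_right _ _)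
      rw [Cardinal.mk_prod]
      have h1 : Cardinal.lift.{0} (Cardinal.mk ↥B) = Cardinal.mk ↥B := Cardinal.lift_uzero _
      have h2 : Cardinal.lift (Cardinal.mk ℚ) = Cardinal.aleph0 := by
        rw [Cardinal.mk_eq_aleph0 ℚ, Cardinal.lift_aleph0]
      rw [h1, h2]
      calc Cardinal.aleph0 * Cardinal.mk ↥B
          ≤ max (max Cardinal.aleph0 (Cardinal.mk ↥B)) Cardinal.aleph0 :=
            Cardinal.mul_le_max _ _
        _ ≤ max (Cardinal.mk ↥B) Cardinal.aleph0 :=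
            max_le (max_le (le_max_right _ _) (le_max_left _ _)) (le_max_right _ _)

end SpanAux

section UltraAux

variable {I : Type*} (D : Ultrafilter I) {X : Type*}
  [NormedAddCommGroup X] [NormedSpace ℝ X]

lemma mem_ultraNull_iff {g : lp (fun _ : I => X) ∞} :
    g ∈ ultraNull D X ↔ Tendsto (fun i => ‖g i‖) (D : Filter I) (nhds 0) :=
  Iff.rfl

lemma ultra_norm_le {f : lp (fun _ : I => X) ∞} {c : ℝ} (hc : 0 ≤ c)
    (h : {i | ‖f i‖ ≤ c} ∈ D) :
    ‖(Submodule.Quotient.mk f : Ultrapower D X)‖ ≤ c := by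
  classical
  set w : ∀ _ : I, X := fun i => if ‖f i‖ ≤ c then f i else 0 with hw
  have hwb : Memℓp w ∞ := by
    apply memℓp_infty
    refine ⟨c, ?_⟩
    rintro - ⟨i, rfl⟩
    by_cases hi : ‖f i‖ ≤ c <;> simp [hw, hi, hc]
  set W : lp (fun _ : I => X) ∞ := ⟨w, hwb⟩ with hW
  have hWi : ∀ i, W i = w i := fun i => rfl
  have hmk : (Submodule.Quotient.mk f : Ultrapower D X) = Submodule.Quotient.mk W := by
    rw [Submodule.Quotient.eq]
    rw [mem_ultraNull_iff]
    have hev : (fun i => ‖(f - W) i‖) =ᶠ[(D : Filter I)] (fun _ => (0:ℝ)) := by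
      refine Filter.eventuallyEq_of_mem h ?_
      intro i hi
      have h1 : (f - W) i = f i - W i := by
        rw [lp.coeFn_sub]; rfl
      show ‖(f - W) i‖ = (0:ℝ)
      rw [h1, hWi i]
      simp only [Set.mem_setOf_eq] at hi
      simp only [hw]
      rw [if_pos hi]
      simp
    exact (Filter.tendsto_congr' hev).2 tendsto_const_nhds
  rw [hmk]
  refine le_trans (Submodule.Quotient.norm_mk_le _ _) ?_
  refine lp.norm_le_of_forall_le hc ?_
  intro i
  rw [hWi i]
  simp only [hw]
  by_cases hi : ‖f i‖ ≤ c <;> simp [hi, hc]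

lemma ultra_le_norm {f : lp (fun _ : I => X) ∞} {c : ℝ}
    (h : {i | c ≤ ‖f i‖} ∈ D) :
    c ≤ ‖(Submodule.Quotient.mk f : Ultrapower D X)‖ := by
  by_contra hlt
  push_neg at hlt
  obtain ⟨m, hm, hmn⟩ := Submodule.Quotient.norm_mk_lt
    (Submodule.Quotient.mk f : Ultrapower D X)
    (show (0:ℝ) < c - ‖(Submodule.Quotient.mk f : Ultrapower D X)‖ by linarith)
  have hmn' : ‖m‖ < c := by linarith
  have hnull : m - f ∈ ultraNull D X := by
    rw [← Submodule.Quotient.eq]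
    exact hm
  have htend := (mem_ultraNull_iff D).1 hnull
  have hev : ∀ᶠ i in (D : Filter I), ‖(m - f) i‖ < c - ‖m‖ :=
    htend.eventually_lt_const (by linarith)
  have hmem : {i | c ≤ ‖f i‖} ∩ {i | ‖(m - f) i‖ < c - ‖m‖} ∈ (D : Filter I) := by
    refine Filter.inter_mem ?_ hev
    exact h
  obtain ⟨i, hi1, hi2⟩ := Filter.nonempty_of_mem hmem
  have h1 : (m - f) i = m i - f i := by rw [lp.coeFn_sub]; rfl
  rw [Set.mem_setOf_eq, h1] at hi2
  have h2 : ‖m i‖ ≤ ‖m‖ := lp.norm_apply_le_norm ENNReal.top_ne_zero m i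
  have h3 : ‖f i‖ ≤ ‖m i‖ + ‖m i - f i‖ := by
    calc ‖f i‖ = ‖m i - (m i - f i)‖ := by rw [sub_sub_cancel]
      _ ≤ ‖m i‖ + ‖m i - f i‖ := norm_sub_le _ _
  have hi1' : c ≤ ‖f i‖ := hi1
  linarith

end UltraAux

/-- For every infinite-dimensional Banach space
ultrafilter `D`, the ultrapower satisfies `dim (X)_D = (dim (X)_D) ^ ω`. -/
theorem spanDim_ultrapower_pow_aleph0
    (X : Type*) [NormedAddCommGroup X] [NormedSpace ℝ X] [CompleteSpace X]
    (hinf : ¬ FiniteDimensional ℝ X)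
    {I : Type*} (D : Ultrafilter I) (hD : CountablyIncomplete D) :
    spanDim (Ultrapower D X) = (spanDim (Ultrapower D X)) ^ Cardinal.aleph0 := by
  classical
  have haux : spanDim (Ultrapower D X) ^ Cardinal.aleph0
      ≤ max (spanDim (Ultrapower D X)) Cardinal.aleph0 := by
    -- a witness of the infimum in `spanDim`
    have hne : Set.Nonempty {c : Cardinal | ∃ s : Set (Ultrapower D X),
        closure (Submodule.span ℝ s : Set (Ultrapower D X)) = Set.univ
          ∧ Cardinal.mk s = c} := by
      refine ⟨_, Set.univ, ?_, rfl⟩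
      rw [Submodule.span_univ]
      simp
    obtain ⟨B, hBspan, hBcard⟩ := csInf_mem hne
    have hBcard' : Cardinal.mk B = spanDim (Ultrapower D X) := hBcard
    -- a dense set of controlled cardinality
    obtain ⟨RB, hRBdense, hRBcard⟩ := exists_dense_card hBspan
    -- a separated spanning set of the ultrapower
    obtain ⟨T, hT1, hTsep, hTspan⟩ := exists_sep_spanning (Ultrapower D X)
    have hlamT : spanDim (Ultrapower D X) ≤ Cardinal.mk T :=
      csInf_le' (by exact ⟨T, hTspan, rfl⟩)
    -- a separated spanning set of X, necessarily infinite
    obtain ⟨FX, hFX1, hFXsep, hFXspan⟩ := exists_sep_spanning X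
    have hFXinf : Cardinal.aleph0 ≤ Cardinal.mk FX := by
      rw [← Cardinal.infinite_iff, Set.infinite_coe_iff]
      intro hfin
      haveI : FiniteDimensional ℝ (Submodule.span ℝ FX) :=
        FiniteDimensional.span_of_finite ℝ hfin
      have hclosed : IsClosed ((Submodule.span ℝ FX : Submodule ℝ X) : Set X) :=
        Submodule.closed_of_finiteDimensional _
      have hspan_top : Submodule.span ℝ FX = ⊤ := by
        refine Submodule.eq_top_iff'.2 fun x => ?_
        rw [← SetLike.mem_coe, ← hclosed.closure_eq, hFXspan]
        trivial
      exact hinf (Module.Finite.equiv (LinearEquiv.ofTop _ hspan_top))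
    -- a dense set of X of cardinality at most that of FX
    obtain ⟨RX, hRXdense, hRXcard⟩ := exists_dense_card hFXspan
    have hRXF : Cardinal.mk RX ≤ Cardinal.mk FX :=
      le_trans hRXcard (by rw [max_eq_left hFXinf])
    -- countable incompleteness gives a decreasing chain
    unfold CountablyIncomplete UltrafilterComplete at hD
    push_neg at hD
    obtain ⟨G, hG, hGcard, hGint⟩ := hD
    have hGcount : Countable G := by
      rw [← Cardinal.mk_le_aleph0_iff]
      rw [← Cardinal.succ_aleph0, Cardinal.lift_succ, Cardinal.lift_aleph0] at hGcard
      exact Cardinal.lift_le_aleph0.1 (Order.lt_succ_iff.1 hGcard)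
    have hGne : G.Nonempty := by
      rcases Set.eq_empty_or_nonempty G with rfl | h
      · rw [Set.sInter_empty] at hGint
        exact absurd (Ultrafilter.mem_coe.1 Filter.univ_mem) hGint
      · exact h
    haveI := hGne.to_subtype
    obtain ⟨gg, hgg⟩ := exists_surjective_nat ↥G
    set Iset : ℕ → Set I := fun n => (⋂ k : Fin (n+1), ((gg k : Set I))) ∩ (⋂₀ G)ᶜ with hIset
    have hIsetD : ∀ n, Iset n ∈ (D : Filter I) := by
      intro n
      refine Filter.inter_mem ?_ ?_
      · rw [Filter.iInter_mem]
        intro k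
        exact Ultrafilter.mem_coe.2 (hG _ (gg k).2)
      · exact Ultrafilter.mem_coe.2 (Ultrafilter.compl_mem_iff_notMem.2 hGint)
    have hIanti : ∀ {m n : ℕ}, m ≤ n → Iset n ⊆ Iset m := by
      intro m n hmn i hi
      obtain ⟨h1, h2⟩ := hi
      rw [Set.mem_iInter] at h1
      refine ⟨Set.mem_iInter.2 fun k => ?_, h2⟩
      exact h1 ⟨k.1, by omega⟩
    have hex : ∀ i : I, ∃ n, i ∉ Iset n := by
      intro i
      by_contra hc
      push_neg at hc
      have h1 : i ∈ ⋂₀ G := by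
        rw [Set.mem_sInter]
        intro A hA
        obtain ⟨k, hk⟩ := hgg ⟨A, hA⟩
        have h2 := (hc k).1
        rw [Set.mem_iInter] at h2
        have h3 := h2 ⟨k, by omega⟩
        rw [hk] at h3
        exact h3
      exact (hc 0).2 h1
    -- representatives of elements of T
    have hrep : ∀ t : T, ∃ g : lp (fun _ : I => X) ∞,
        Submodule.Quotient.mk g = (t : Ultrapower D X) :=
      fun t => Submodule.Quotient.mk_surjective _ _
    choose f hf using hrep
    -- pointwise separation of representatives along D
    have hfs : ∀ t t' : T, t ≠ t' → {i | (1:ℝ)/8 ≤ ‖f t i - f t' i‖} ∈ D := by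
      intro t t' htt
      by_contra hA
      have h1 : {i | ‖(f t - f t') i‖ ≤ 1/8} ∈ D := by
        have h2 := Ultrafilter.compl_mem_iff_notMem.2 hA
        refine Ultrafilter.mem_coe.1
          (Filter.mem_of_superset (Ultrafilter.mem_coe.2 h2) ?_)
        intro i hi
        rw [Set.mem_compl_iff, Set.mem_setOf_eq, not_le] at hi
        have h3 : (f t - f t') i = f t i - f t' i := by rw [lp.coeFn_sub]; rfl
        rw [Set.mem_setOf_eq, h3]
        linarith
      have h4 := ultra_norm_le D (by norm_num) h1
      rw [Submodule.Quotient.mk_sub, hf t, hf t'] at h4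
      have h5 := hTsep (t : Ultrapower D X) t.2 (t' : Ultrapower D X) t'.2
        (fun hcon => htt (Subtype.ext hcon))
      rw [dist_eq_norm] at h5
      linarith
    -- nets in the finite powers of X
    have hMex : ∀ i : I, ∃ M : Set (Fin (Nat.find (hex i)) → X),
        (∀ a ∈ M, ∀ b ∈ M, a ≠ b → (1:ℝ)/64 ≤ dist a b) ∧
        ∀ x : Fin (Nat.find (hex i)) → X, ∃ m ∈ M, dist x m < 1/64 := by
      intro i
      obtain ⟨M, _, hMsep, hMnet⟩ :=
        exists_max_sep (Set.univ : Set (Fin (Nat.find (hex i)) → X))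
          (by norm_num : (0:ℝ) < 1/64)
      exact ⟨M, hMsep, fun x => hMnet x trivial⟩
    choose M hMsep hMnet using hMex
    choose π hπmem hπd using hMnet
    have hMcard : ∀ i : I, Cardinal.mk (M i) ≤ Cardinal.mk FX := by
      intro i
      have hdense : ∀ y : Fin (Nat.find (hex i)) → X,
          ∃ r ∈ {g : Fin (Nat.find (hex i)) → X | ∀ j, g j ∈ RX},
            dist y r < 1/64/2 := by
        intro y
        have h1 : ∀ j, ∃ r ∈ RX, dist (y j) r < 1/64/2 :=
          fun j => hRXdense (y j) _ (by norm_num)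
        choose r hr hrd using h1
        exact ⟨r, hr, (dist_pi_lt_iff (by norm_num)).2 hrd⟩
      have h1 : Cardinal.mk (M i)
          ≤ Cardinal.mk {g : Fin (Nat.find (hex i)) → X | ∀ j, g j ∈ RX} :=
        sep_card_le (by norm_num : (0:ℝ) < 1/64) (hMsep i) hdense
      refine le_trans h1 ?_
      have h2 : Cardinal.mk {g : Fin (Nat.find (hex i)) → X | ∀ j, g j ∈ RX}
          ≤ Cardinal.mk (Fin (Nat.find (hex i)) → RX) := by
        refine Cardinal.mk_le_of_injective
          (f := fun g : {g : Fin (Nat.find (hex i)) → X | ∀ j, g j ∈ RX} =>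
            (fun j => (⟨(g : Fin (Nat.find (hex i)) → X) j, g.2 j⟩ : RX))) ?_
        intro a b hab
        apply Subtype.ext
        funext j
        exact congrArg Subtype.val (congrFun hab j)
      refine le_trans h2 ?_
      rw [Cardinal.mk_arrow, Cardinal.lift_uzero, Cardinal.mk_fin,
        Cardinal.lift_natCast, Cardinal.power_natCast]
      calc Cardinal.mk RX ^ (Nat.find (hex i))
          ≤ Cardinal.mk FX ^ (Nat.find (hex i)) :=
            pow_le_pow_left₀ zero_le hRXF _
        _ ≤ Cardinal.mk FX := Cardinal.power_nat_le hFXinf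
    have hcode : ∀ i : I, (M i) ↪ FX := fun i =>
      Classical.choice ((Cardinal.le_def _ _).1 (hMcard i))
    -- the coded family
    have humem : ∀ s : ℕ → T, Memℓp (fun i =>
        ((hcode i ⟨π i (fun m : Fin (Nat.find (hex i)) => f (s m.1) i),
          hπmem i _⟩ : FX) : X)) ∞ := by
      intro s
      apply memℓp_infty
      refine ⟨1, ?_⟩
      rintro - ⟨i, rfl⟩
      exact le_of_eq (hFX1 _ (hcode i _).2)
    obtain ⟨u, hui⟩ : ∃ u : (ℕ → T) → lp (fun _ : I => X) ∞, ∀ s (i : I), u s i =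
        ((hcode i ⟨π i (fun m : Fin (Nat.find (hex i)) => f (s m.1) i),
          hπmem i _⟩ : FX) : X) :=
      ⟨fun s => ⟨_, humem s⟩, fun s i => rfl⟩
    set Φ : (ℕ → T) → Ultrapower D X := fun s => Submodule.Quotient.mk (u s) with hPhi
    -- uniform separation of the family
    have hPhisep : ∀ s s' : ℕ → T, s ≠ s' → (1:ℝ)/4 ≤ dist (Φ s) (Φ s') := by
      intro s s' hss
      obtain ⟨n, hn⟩ : ∃ n, s n ≠ s' n := by
        by_contra hcon; push_neg at hcon; exact hss (funext hcon)
      have hsub : ({i | n < Nat.find (hex i)}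
            ∩ {i | (1:ℝ)/8 ≤ ‖f (s n) i - f (s' n) i‖})
          ⊆ {i | (1:ℝ)/4 ≤ ‖(u s - u s') i‖} := by
        rintro i ⟨hi1, hi2⟩
        rw [Set.mem_setOf_eq] at hi1 hi2 ⊢
        have hm : (1:ℝ)/8 ≤ dist (fun m : Fin (Nat.find (hex i)) => f (s m.1) i)
            (fun m : Fin (Nat.find (hex i)) => f (s' m.1) i) := by
          refine le_trans ?_ (dist_le_pi_dist _ _ (⟨n, hi1⟩ : Fin (Nat.find (hex i))))
          rw [dist_eq_norm]
          exact hi2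
        have hd2 : (0:ℝ) < dist (π i (fun m : Fin (Nat.find (hex i)) => f (s m.1) i))
            (π i (fun m : Fin (Nat.find (hex i)) => f (s' m.1) i)) := by
          have h3 := hπd i (fun m : Fin (Nat.find (hex i)) => f (s m.1) i)
          have h4 := hπd i (fun m : Fin (Nat.find (hex i)) => f (s' m.1) i)
          have h5 := dist_triangle4
            (fun m : Fin (Nat.find (hex i)) => f (s m.1) i)
            (π i (fun m : Fin (Nat.find (hex i)) => f (s m.1) i))
            (π i (fun m : Fin (Nat.find (hex i)) => f (s' m.1) i))
            (fun m : Fin (Nat.find (hex i)) => f (s' m.1) i)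
          have h6 : dist (π i (fun m : Fin (Nat.find (hex i)) => f (s' m.1) i))
              (fun m : Fin (Nat.find (hex i)) => f (s' m.1) i)
              = dist (fun m : Fin (Nat.find (hex i)) => f (s' m.1) i)
                (π i (fun m : Fin (Nat.find (hex i)) => f (s' m.1) i)) := dist_comm _ _
          linarith
        have hne2 : (⟨π i (fun m : Fin (Nat.find (hex i)) => f (s m.1) i),
              hπmem i _⟩ : M i)
            ≠ ⟨π i (fun m : Fin (Nat.find (hex i)) => f (s' m.1) i), hπmem i _⟩ := by
          intro hcon
          have h7 := Subtype.mk_eq_mk.1 hcon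
          rw [h7, dist_self] at hd2
          exact lt_irrefl _ hd2
        have hne3 : ((hcode i ⟨π i (fun m : Fin (Nat.find (hex i)) => f (s m.1) i),
              hπmem i _⟩ : FX) : X)
            ≠ ((hcode i ⟨π i (fun m : Fin (Nat.find (hex i)) => f (s' m.1) i),
              hπmem i _⟩ : FX) : X) := by
          intro hcon
          exact hne2 ((hcode i).injective (Subtype.ext hcon))
        have hsep4 := hFXsep _
          (hcode i ⟨π i (fun m : Fin (Nat.find (hex i)) => f (s m.1) i), hπmem i _⟩).2 _
          (hcode i ⟨π i (fun m : Fin (Nat.find (hex i)) => f (s' m.1) i), hπmem i _⟩).2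
          hne3
        have hcoe : (u s - u s') i = u s i - u s' i := by rw [lp.coeFn_sub]; rfl
        rw [hcoe, hui s i, hui s' i, ← dist_eq_norm]
        exact hsep4
      have hA : ({i | n < Nat.find (hex i)}
            ∩ {i | (1:ℝ)/8 ≤ ‖f (s n) i - f (s' n) i‖}) ∈ (D : Filter I) := by
        refine Filter.inter_mem ?_ (Ultrafilter.mem_coe.2 (hfs _ _ hn))
        refine Filter.mem_of_superset (hIsetD n) ?_
        intro i hi
        rw [Set.mem_setOf_eq, Nat.lt_find_iff]
        intro m hm hnotin
        exact hnotin (hIanti hm hi)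
      have h5 : (1:ℝ)/4 ≤ ‖(Submodule.Quotient.mk (u s - u s') : Ultrapower D X)‖ :=
        ultra_le_norm D (Ultrafilter.mem_coe.1 (Filter.mem_of_superset hA hsub))
      rw [Submodule.Quotient.mk_sub] at h5
      rw [dist_eq_norm]
      exact h5
    -- cardinality bookkeeping
    have hPhiinj : Function.Injective Φ := by
      intro s s' hss
      by_contra hne2
      have h1 := hPhisep s s' hne2
      rw [hss, dist_self] at h1
      linarith
    have hWsep : ∀ a ∈ Set.range Φ, ∀ b ∈ Set.range Φ, a ≠ b → (1:ℝ)/4 ≤ dist a b := by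
      rintro a ⟨s, rfl⟩ b ⟨s', rfl⟩ hab
      exact hPhisep s s' fun hcon => hab (by rw [hcon])
    have hcard1 : Cardinal.mk (Set.range Φ) ≤ Cardinal.mk RB :=
      sep_card_le (by norm_num : (0:ℝ) < 1/4) hWsep
        (fun y => hRBdense y _ (by norm_num))
    have hcard2 : Cardinal.mk (ℕ → T) = Cardinal.mk T ^ Cardinal.aleph0 := by
      rw [Cardinal.mk_arrow, Cardinal.lift_uzero, Cardinal.mk_nat, Cardinal.lift_aleph0]
    calc spanDim (Ultrapower D X) ^ Cardinal.aleph0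
        ≤ Cardinal.mk T ^ Cardinal.aleph0 := Cardinal.power_le_power_right hlamT
      _ = Cardinal.mk (ℕ → T) := hcard2.symm
      _ = Cardinal.mk (Set.range Φ) := (Cardinal.mk_range_eq Φ hPhiinj).symm
      _ ≤ Cardinal.mk RB := hcard1
      _ ≤ max (Cardinal.mk B) Cardinal.aleph0 := hRBcard
      _ = max (spanDim (Ultrapower D X)) Cardinal.aleph0 := by rw [hBcard']
  refine le_antisymm (Cardinal.self_le_power _ (le_of_lt Cardinal.one_lt_aleph0)) ?_
  rcases le_or_gt Cardinal.aleph0 (spanDim (Ultrapower D X)) with hcase | hcase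
  · exact le_trans haux (by rw [max_eq_left hcase])
  · obtain ⟨n, hn⟩ := Cardinal.lt_aleph0.1 hcase
    rcases n with _ | n
    · rw [hn, Nat.cast_zero, Cardinal.zero_power Cardinal.aleph0_ne_zero]
    · rcases n with _ | n
      · rw [hn, Nat.cast_one, Cardinal.one_power]
      · exfalso
        have h2 : (2 : Cardinal) ≤ spanDim (Ultrapower D X) := by
          rw [hn]
          exact_mod_cast (by omega : 2 ≤ n + 2)
        have h3 : (2 : Cardinal) ^ Cardinal.aleph0 ≤ Cardinal.aleph0 := by
          refine le_trans (Cardinal.power_le_power_right h2) (le_trans haux ?_)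
          rw [max_eq_right (le_of_lt hcase)]
        exact absurd h3 (not_le.2 (Cardinal.cantor Cardinal.aleph0))
end
end
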